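/- Fix n ≥ 1. Then the relation ⪯ on RT_n is antisymmetric: if τ, ν ∈ RT_n satisfy τ ⪯ ν and ν ⪯ τ, then τ = ν. (Hence ⪯ is a partial order on RT_n.) -/
import Mathlib


/-- `IsRT n τ` : `τ` is a representation type of total dimension `n`, i.e. a finite
multiset of pairs `(d, e)` of positive integers with `∑ d·e = n`. -/
def IsRT (n : ℕ) (τ : Multiset (ℕ × ℕ)) : Prop :=
  (∀ p ∈ τ, 0 < p.1 ∧ 0 < p.2) ∧ (τ.map fun p => p.1 * p.2).sum = n

/-- `ElemRef τ τ'` : `τ'` is obtained from `τ` by a single elementary refinement: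
either (1) replacing one pair `(d, e)` by `(a, e), (b, e)` with `a, b ≥ 1`, `a + b = d`,
or (2) replacing two pairs `(d, e), (d, e')` with the same first coordinate by the
single pair `(d, e + e')`. -/
def ElemRef (τ τ' : Multiset (ℕ × ℕ)) : Prop :=
  (∃ (σ : Multiset (ℕ × ℕ)) (d e a b : ℕ), 0 < a ∧ 0 < b ∧ a + b = d ∧
      τ = (d, e) ::ₘ σ ∧ τ' = (a, e) ::ₘ (b, e) ::ₘ σ) ∨
  (∃ (σ : Multiset (ℕ × ℕ)) (d e e' : ℕ),
      τ = (d, e) ::ₘ (d, e') ::ₘ σ ∧ τ' = (d, e + e') ::ₘ σ)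

/-- `RTle μ τ` (i.e. `μ ⪯ τ`) : `μ` is obtained from `τ` by a (possibly empty) finite
sequence of elementary refinements; the reflexive–transitive closure of `ElemRef`. -/
def RTle (μ τ : Multiset (ℕ × ℕ)) : Prop :=
  Relation.ReflTransGen ElemRef τ μ


/-- Measure: `2·∑ d²·e + card`; strictly decreases under elementary refinements. -/
def RTM (σ : Multiset (ℕ × ℕ)) : ℕ :=
  2 * (σ.map fun p => p.1 * p.1 * p.2).sum + Multiset.card σ

lemma elemRef_isRT {n : ℕ} {τ τ' : Multiset (ℕ × ℕ)} (h : ElemRef τ τ')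
    (hτ : IsRT n τ) : IsRT n τ' := by
  obtain ⟨hpos, hsum⟩ := hτ
  rcases h with ⟨σ, d, e, a, b, ha, hb, hab, rfl, rfl⟩ | ⟨σ, d, e, e', rfl, rfl⟩
  · constructor
    · intro p hp
      have hde := hpos (d, e) (Multiset.mem_cons_self _ _)
      simp only [Multiset.mem_cons] at hp
      rcases hp with rfl | rfl | hp
      · exact ⟨ha, hde.2⟩
      · exact ⟨hb, hde.2⟩
      · exact hpos p (Multiset.mem_cons_of_mem hp)
    · simp only [Multiset.map_cons, Multiset.sum_cons] at hsum ⊢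
      subst hab; nlinarith [hsum]
  · constructor
    · intro p hp
      have h1 := hpos (d, e) (Multiset.mem_cons_self _ _)
      have h2 := hpos (d, e') (Multiset.mem_cons_of_mem (Multiset.mem_cons_self _ _))
      simp only [Multiset.mem_cons] at hp
      rcases hp with rfl | hp
      · exact ⟨h1.1, by simp; omega⟩
      · exact hpos p (Multiset.mem_cons_of_mem (Multiset.mem_cons_of_mem hp))
    · simp only [Multiset.map_cons, Multiset.sum_cons] at hsum ⊢
      nlinarith [hsum]

lemma elemRef_RTM {n : ℕ} {τ τ' : Multiset (ℕ × ℕ)} (h : ElemRef τ τ')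
    (hτ : IsRT n τ) : RTM τ' < RTM τ := by
  obtain ⟨hpos, -⟩ := hτ
  rcases h with ⟨σ, d, e, a, b, ha, hb, hab, rfl, rfl⟩ | ⟨σ, d, e, e', rfl, rfl⟩
  · have he := (hpos (d, e) (Multiset.mem_cons_self _ _)).2
    have he' : 0 < e := he
    simp only [RTM, Multiset.map_cons, Multiset.sum_cons, Multiset.card_cons]
    subst hab; nlinarith [mul_pos (mul_pos ha hb) he']
  · simp only [RTM, Multiset.map_cons, Multiset.sum_cons, Multiset.card_cons]
    nlinarith

lemma RTle_key {n : ℕ} {τ μ : Multiset (ℕ × ℕ)} (hτ : IsRT n τ) (h : RTle μ τ) :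
    IsRT n μ ∧ (μ = τ ∨ RTM μ < RTM τ) := by
  induction h with
  | refl => exact ⟨hτ, Or.inl rfl⟩
  | tail hab hbc ih =>
    obtain ⟨hb, hM⟩ := ih
    refine ⟨elemRef_isRT hbc hb, Or.inr ?_⟩
    have hlt := elemRef_RTM hbc hb
    rcases hM with rfl | h' <;> omega

/-- The refinement relation `⪯` on representation types in `RT_n` is antisymmetric
(hence a partial order). -/
theorem luna_stmt12 (n : ℕ) (hn : 1 ≤ n) (τ ν : Multiset (ℕ × ℕ))
    (hτ : IsRT n τ) (hν : IsRT n ν) (h1 : RTle τ ν) (h2 : RTle ν τ) : τ = ν := by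
  rcases (RTle_key hν h1).2 with h | h
  · exact h
  · rcases (RTle_key hτ h2).2 with h' | h'
    · exact h'.symm
    · omega
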